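/- Let k ≥ 2 and let B be a weakly 2-wise balanced design over a finite linearly ordered set A such that |A| = k² + k + 1, |B| = k² + k + 1, every block contains exactly k + 1 points, and any two distinct points are contained together in exactly one block (i.e., A and B are the points and lines of a finite projective plane of order k). Let P_k = Γ_{B,3}. Then P_k is triangle-free, α(P_k) ≤ 2·(k² + k + 1), and χ(P_k) ≥ (k + 1)/2. -/

import Mathlib

open Finset

/-- `B` is a weakly `m`-wise balanced design over the finite set `A`:
every block is a nonempty subset of `A`, every point of `A` lies in at least
one block, and any `m` pairwise distinct points of `A` are contained together
in at most one block. -/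
def IsWeaklyBalancedDesign {α : Type*} [DecidableEq α] (m : ℕ)
    (A : Finset α) (B : Finset (Finset α)) : Prop :=
  (∀ C ∈ B, C ⊆ A) ∧
  (∀ C ∈ B, C.Nonempty) ∧
  (∀ x ∈ A, ∃ C ∈ B, x ∈ C) ∧
  (∀ S : Finset α, S ⊆ A → S.card = m → (B.filter fun C => S ⊆ C).card ≤ 1)

/-- The vertex set of `Γ_{B,m}`: all incidence pairs `(x, C)` with `x ∈ C ∈ B`. -/
def designVerts {α : Type*} [DecidableEq α] (B : Finset (Finset α)) :
    Finset (α × Finset α) :=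
  B.biUnion fun C => C.image fun x => (x, C)

/-- The graph `Γ_{B,m}` on incidence pairs: `(x, C₁)` and `(y, C₂)` are adjacent
iff `x < y`, `C₁ ≠ C₂` and `x ∈ C₂`, or symmetrically `y < x`, `C₂ ≠ C₁` and `y ∈ C₁`. -/
def designGraph {α : Type*} [inst : LinearOrder α] (B : Finset (Finset α)) :
    SimpleGraph (designVerts (α := α) B) where
  Adj u v :=
    (u.val.1 < v.val.1 ∧ u.val.2 ≠ v.val.2 ∧ u.val.1 ∈ v.val.2) ∨
    (v.val.1 < u.val.1 ∧ v.val.2 ≠ u.val.2 ∧ v.val.1 ∈ u.val.2)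
  symm := ⟨fun u v h => by tauto⟩
  loopless := ⟨fun u h => by
    rcases h with ⟨h, _, _⟩ | ⟨h, _, _⟩ <;> exact lt_irrefl _ h⟩

/-- The independence number of a graph: the largest size of an independent set of vertices. -/
noncomputable def indepNum {V : Type*} (G : SimpleGraph V) : ℕ :=
  sSup {n | ∃ s : Finset V, s.card = n ∧ ∀ x ∈ s, ∀ y ∈ s, ¬ G.Adj x y}

lemma mem_designVerts' {α : Type*} [DecidableEq α] {B : Finset (Finset α)}
    {v : α × Finset α} (hv : v ∈ designVerts B) : v.2 ∈ B ∧ v.1 ∈ v.2 := by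
  simp only [designVerts, Finset.mem_biUnion, Finset.mem_image] at hv
  obtain ⟨C, hC, x, hx, h⟩ := hv
  subst h
  exact ⟨hC, hx⟩

lemma no_ordered_triangle {α : Type*} [LinearOrder α] {A : Finset α}
    {B : Finset (Finset α)} (hB : IsWeaklyBalancedDesign 2 A B)
    (u v w : designVerts (α := α) B)
    (huv : (designGraph B).Adj u v) (huw : (designGraph B).Adj u w)
    (hvw : (designGraph B).Adj v w)
    (h1 : u.val.1 < v.val.1) (h2 : v.val.1 < w.val.1) : False := by
  obtain ⟨hvB, hyv⟩ := mem_designVerts' v.prop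
  obtain ⟨hwB, _⟩ := mem_designVerts' w.prop
  have hxD : u.val.1 ∈ v.val.2 := by
    rcases huv with ⟨_, _, h⟩ | ⟨h', _, _⟩
    · exact h
    · exact absurd h1 (not_lt.mpr h'.le)
  have hxE : u.val.1 ∈ w.val.2 := by
    rcases huw with ⟨_, _, h⟩ | ⟨h', _, _⟩
    · exact h
    · exact absurd (h1.trans h2) (not_lt.mpr h'.le)
  obtain ⟨hDE, hyE⟩ : v.val.2 ≠ w.val.2 ∧ v.val.1 ∈ w.val.2 := by
    rcases hvw with ⟨_, h, h'⟩ | ⟨h', _, _⟩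
    · exact ⟨h, h'⟩
    · exact absurd h2 (not_lt.mpr h'.le)
  have hSA : ({u.val.1, v.val.1} : Finset α) ⊆ A := by
    intro z hz
    rcases Finset.mem_insert.mp hz with rfl | hz
    · exact hB.1 _ hvB hxD
    · rw [Finset.mem_singleton] at hz; subst hz; exact hB.1 _ hvB hyv
  have hScard : ({u.val.1, v.val.1} : Finset α).card = 2 :=
    Finset.card_pair (ne_of_lt h1)
  have hle := hB.2.2.2 _ hSA hScard
  have h2lt : 1 < (B.filter fun C => ({u.val.1, v.val.1} : Finset α) ⊆ C).card := by
    refine Finset.one_lt_card.mpr ⟨v.val.2, ?_, w.val.2, ?_, hDE⟩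
    · refine Finset.mem_filter.mpr ⟨hvB, ?_⟩
      intro z hz
      rcases Finset.mem_insert.mp hz with rfl | hz
      · exact hxD
      · rw [Finset.mem_singleton] at hz; subst hz; exact hyv
    · refine Finset.mem_filter.mpr ⟨hwB, ?_⟩
      intro z hz
      rcases Finset.mem_insert.mp hz with rfl | hz
      · exact hxE
      · rw [Finset.mem_singleton] at hz; subst hz; exact hyE
  omega

lemma indep_bound {α : Type*} [LinearOrder α] {A : Finset α}
    {B : Finset (Finset α)} (hBA : ∀ C ∈ B, C ⊆ A)
    (s : Finset (designVerts (α := α) B))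
    (hs : ∀ x ∈ s, ∀ y ∈ s, ¬ (designGraph B).Adj x y) :
    s.card ≤ A.card + B.card := by
  classical
  have hmap : ∀ v ∈ s, (if ∀ w ∈ s, w.val.2 = v.val.2 → w.val.1 ≤ v.val.1
      then (Sum.inr v.val.2 : α ⊕ Finset α) else Sum.inl v.val.1) ∈ A.disjSum B := by
    intro v _
    split_ifs
    · exact Finset.inr_mem_disjSum.mpr (mem_designVerts' v.prop).1
    · exact Finset.inl_mem_disjSum.mpr
        (hBA _ (mem_designVerts' v.prop).1 (mem_designVerts' v.prop).2)
  have := Finset.card_le_card_of_injOn _ hmap ?_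
  · simpa [Finset.card_disjSum] using this
  · intro u hu v hv hfe
    simp only at hfe
    by_cases h1 : (∀ w ∈ s, w.val.2 = u.val.2 → w.val.1 ≤ u.val.1)
    · by_cases h2 : (∀ w ∈ s, w.val.2 = v.val.2 → w.val.1 ≤ v.val.1)
      · rw [if_pos h1, if_pos h2] at hfe
        have hblk : u.val.2 = v.val.2 := by simpa using hfe
        have h3 := h1 v (Finset.mem_coe.mp hv) hblk.symm
        have h4 := h2 u (Finset.mem_coe.mp hu) hblk
        exact Subtype.ext (Prod.ext (le_antisymm h4 h3) hblk)
      · rw [if_pos h1, if_neg h2] at hfe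
        exact absurd hfe (by simp)
    by_cases h2 : (∀ w ∈ s, w.val.2 = v.val.2 → w.val.1 ≤ v.val.1)
    · rw [if_neg h1, if_pos h2] at hfe
      exact absurd hfe (by simp)
    rw [if_neg h1, if_neg h2] at hfe
    have hpt : u.val.1 = v.val.1 := by simpa using hfe
    by_cases hblk : u.val.2 = v.val.2
    · exact Subtype.ext (Prod.ext hpt hblk)
    · push_neg at h1
      obtain ⟨w, hw, hwu, hlt⟩ := h1
      refine absurd ?_ (hs v (Finset.mem_coe.mp hv) w hw)
      left
      refine ⟨hpt ▸ hlt, ?_, ?_⟩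
      · rw [hwu]; exact fun h => hblk h.symm
      · rw [hwu, ← hpt]; exact (mem_designVerts' u.prop).2

lemma verts_card {α : Type*} [DecidableEq α] {B : Finset (Finset α)} {k : ℕ}
    (hblocks : ∀ C ∈ B, C.card = k + 1) :
    (designVerts B).card = B.card * (k + 1) := by
  rw [designVerts, Finset.card_biUnion]
  · rw [Finset.sum_congr rfl (fun C hC => ?_), Finset.sum_const, smul_eq_mul]
    rw [Finset.card_image_of_injective _ (fun a b h => by simpa using h), hblocks C hC]
  · intro C₁ h1 C₂ h2 hne
    simp only [Finset.disjoint_left, Finset.mem_image]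
    rintro a ⟨x, hx, rfl⟩ ⟨y, hy, h⟩
    exact hne (congrArg Prod.snd h).symm

/-- Let `k ≥ 2` and let `A` and `B` be the points and lines of a finite projective plane of
order `k`: a weakly `2`-wise balanced design with `|A| = |B| = k² + k + 1`, every block of
exactly `k + 1` points, and any two distinct points on exactly one common block. Then the
graph `P_k = Γ_{B,3}` is triangle-free, `α(P_k) ≤ 2(k² + k + 1)` and `χ(P_k) ≥ (k+1)/2`. -/
theorem projective_plane_designGraph {α : Type*} [LinearOrder α] (k : ℕ) (hk : 2 ≤ k)
    (A : Finset α) (B : Finset (Finset α))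
    (hB : IsWeaklyBalancedDesign 2 A B)
    (hA : A.card = k ^ 2 + k + 1) (hBcard : B.card = k ^ 2 + k + 1)
    (hblocks : ∀ C ∈ B, C.card = k + 1)
    (hpair : ∀ x ∈ A, ∀ y ∈ A, x ≠ y → (B.filter fun C => x ∈ C ∧ y ∈ C).card = 1) :
    (designGraph B).CliqueFree 3 ∧
      indepNum (designGraph B) ≤ 2 * (k ^ 2 + k + 1) ∧
      ((k : ℝ) + 1) / 2 ≤ (((designGraph B).chromaticNumber.toNat : ℕ) : ℝ) := by
  classical
  have ne_pts : ∀ {u v : designVerts (α := α) B}, (designGraph B).Adj u v →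
      u.val.1 ≠ v.val.1 := by
    rintro u v (⟨h, -, -⟩ | ⟨h, -, -⟩)
    · exact ne_of_lt h
    · exact (ne_of_lt h).symm
  -- triangle-free
  have tf : (designGraph B).CliqueFree 3 := by
    rintro t ⟨hcl, hcard⟩
    obtain ⟨a, b, c, hab, hac, hbc, rfl⟩ := Finset.card_eq_three.mp hcard
    have ha : a ∈ ({a, b, c} : Finset _) := by simp
    have hb : b ∈ ({a, b, c} : Finset _) := by simp
    have hc : c ∈ ({a, b, c} : Finset _) := by simp
    have Aab := hcl ha hb hab
    have Aac := hcl ha hc hac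
    have Abc := hcl hb hc hbc
    rcases lt_trichotomy a.val.1 b.val.1 with h1 | h1 | h1
    · rcases lt_trichotomy b.val.1 c.val.1 with h2 | h2 | h2
      · exact no_ordered_triangle hB a b c Aab Aac Abc h1 h2
      · exact ne_pts Abc h2
      · rcases lt_trichotomy a.val.1 c.val.1 with h3 | h3 | h3
        · exact no_ordered_triangle hB a c b Aac Aab Abc.symm h3 h2
        · exact ne_pts Aac h3
        · exact no_ordered_triangle hB c a b Aac.symm Abc.symm Aab h3 h1
    · exact ne_pts Aab h1
    · rcases lt_trichotomy a.val.1 c.val.1 with h2 | h2 | h2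
      · exact no_ordered_triangle hB b a c Aab.symm Abc Aac h1 h2
      · exact ne_pts Aac h2
      · rcases lt_trichotomy b.val.1 c.val.1 with h3 | h3 | h3
        · exact no_ordered_triangle hB b c a Abc Aab.symm Aac.symm h3 h2
        · exact ne_pts Abc h3
        · exact no_ordered_triangle hB c b a Abc.symm Aac.symm Aab.symm h3 h1
  -- independence bound
  have ibound : ∀ s : Finset (designVerts (α := α) B),
      (∀ x ∈ s, ∀ y ∈ s, ¬ (designGraph B).Adj x y) → s.card ≤ 2 * (k ^ 2 + k + 1) := by
    intro s hs
    have := indep_bound hB.1 s hs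
    rw [hA, hBcard] at this
    omega
  have indep : indepNum (designGraph B) ≤ 2 * (k ^ 2 + k + 1) := by
    refine csSup_le ⟨0, ∅, by simp, by simp⟩ ?_
    rintro m ⟨s, rfl, hs⟩
    exact ibound s hs
  refine ⟨tf, indep, ?_⟩
  -- chromatic bound
  obtain ⟨Cc⟩ := (designGraph B).colorable_chromaticNumber_of_fintype
  set c := (designGraph B).chromaticNumber.toNat with hc
  have hV : Fintype.card (designVerts (α := α) B) = (k ^ 2 + k + 1) * (k + 1) := by
    rw [Fintype.card_coe, verts_card hblocks, hBcard]
  have hcount : (k ^ 2 + k + 1) * (k + 1) ≤ c * (2 * (k ^ 2 + k + 1)) := by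
    rw [← hV, ← Finset.card_univ,
      Finset.card_eq_sum_card_fiberwise (f := Cc) (t := Finset.univ)
        (fun x _ => Finset.mem_univ _)]
    calc ∑ i : Fin c, (Finset.univ.filter fun v => Cc v = i).card
        ≤ ∑ _i : Fin c, 2 * (k ^ 2 + k + 1) := by
          refine Finset.sum_le_sum fun i _ => ibound _ ?_
          intro x hx y hy hadj
          rw [Finset.mem_filter] at hx hy
          exact Cc.valid hadj (hx.2.trans hy.2.symm)
      _ = c * (2 * (k ^ 2 + k + 1)) := by simp [mul_comm]
  have hkle : k + 1 ≤ 2 * c := by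
    have h1 : (k + 1) * (k ^ 2 + k + 1) ≤ (2 * c) * (k ^ 2 + k + 1) := by
      calc (k + 1) * (k ^ 2 + k + 1) = (k ^ 2 + k + 1) * (k + 1) := by ring
        _ ≤ c * (2 * (k ^ 2 + k + 1)) := hcount
        _ = (2 * c) * (k ^ 2 + k + 1) := by ring
    exact Nat.le_of_mul_le_mul_right h1 (by positivity)
  rw [div_le_iff₀ (by norm_num : (0:ℝ) < 2)]
  have : ((k : ℝ) + 1) ≤ 2 * c := by exact_mod_cast hkle
  linarith
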